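/- arXiv:2004.09330 — 2 statements merged into one kernel-verified Lean document; each statement's English description precedes it below -/
import Mathlib

section
/- Let X be a normed vector space and f : X → ℝ ∪ {+∞} be a convex proper function. If f is bounded above on some nonempty open subset U of X, then f is continuous (indeed locally Lipschitz) at every point of the interior of its domain. -/
set_option maxHeartbeats 1000000


open scoped Topology

/-- Convexity for extended-real-valued functions. -/
def EConvexOn {E : Type*} [AddCommGroup E] [Module ℝ E] (f : E → EReal) : Prop :=
  ∀ x y : E, ∀ t : ℝ, 0 ≤ t → t ≤ 1 →
    f (t • x + (1 - t) • y) ≤ (t : EReal) * f x + ((1 - t : ℝ) : EReal) * f y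

private lemma real_of_le_coe {a : EReal} {c : ℝ} (hb : a ≠ ⊥) (h : a ≤ (c : EReal)) :
    ∃ r : ℝ, a = (r : EReal) ∧ r ≤ c := by
  have ht : a ≠ ⊤ := fun h' => by simp [h'] at h
  exact ⟨a.toReal, (EReal.coe_toReal ht hb).symm, by
    rwa [← EReal.coe_toReal ht hb, EReal.coe_le_coe_iff] at h⟩

private lemma conv_real {X : Type*} [AddCommGroup X] [Module ℝ X] {f : X → EReal}
    (hconv : EConvexOn f) {x y : X} {a b : ℝ} (hx : f x = (a : EReal)) (hy : f y = (b : EReal))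
    {t : ℝ} (h0 : 0 ≤ t) (h1 : t ≤ 1) :
    f (t • x + (1 - t) • y) ≤ ((t * a + (1 - t) * b : ℝ) : EReal) := by
  have h := hconv x y t h0 h1
  rw [hx, hy] at h
  refine h.trans_eq ?_
  norm_cast

theorem convex_bounded_above_implies_locally_lipschitz_on_interior_dom
    {X : Type*} [NormedAddCommGroup X] [NormedSpace ℝ X]
    (f : X → EReal) (hconv : EConvexOn f)
    (hnotbot : ∀ x, f x ≠ ⊥) (hproper : ∃ x, f x ≠ ⊤)
    (U : Set X) (hUopen : IsOpen U) (hUne : U.Nonempty)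
    (M : ℝ) (hbd : ∀ x ∈ U, f x ≤ (M : EReal)) :
    ∀ x₀ ∈ interior {x | f x ≠ ⊤},
      ContinuousAt f x₀ ∧
      ∃ V ∈ 𝓝 x₀, ∃ K : ℝ, 0 ≤ K ∧
        ∀ x ∈ V, ∀ y ∈ V, f x ≤ f y + ((K * ‖x - y‖ : ℝ) : EReal) := by
  intro x₀ hx₀
  -- x₁ and a ball inside U
  obtain ⟨x₁, hx₁U⟩ := hUne
  obtain ⟨r, hr, hball₁⟩ := Metric.isOpen_iff.1 hUopen x₁ hx₁U
  -- a ball around x₀ inside the domain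
  obtain ⟨ρ, hρ, hball₀⟩ := Metric.isOpen_iff.1 isOpen_interior x₀ hx₀
  have hdom : ∀ y ∈ Metric.ball x₀ ρ, f y ≠ ⊤ := fun y hy => interior_subset (hball₀ hy)
  -- choose the scaling parameters
  set c : ℝ := ρ / (2 * (‖x₀ - x₁‖ + 1)) with hc_def
  have hnorm_pos : (0:ℝ) < ‖x₀ - x₁‖ + 1 := by positivity
  have hc : 0 < c := by positivity
  set s : ℝ := c / (1 + c) with hs_def
  have h1c : (0:ℝ) < 1 + c := by linarith
  have hs0 : 0 < s := by positivity
  have hs1 : s < 1 := by rw [hs_def, div_lt_one h1c]; linarith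
  have hs_ne : s ≠ 0 := hs0.ne'
  have h1s : (0:ℝ) < 1 - s := by linarith
  have h1s_ne : (1:ℝ) - s ≠ 0 := h1s.ne'
  have hsc : s / (1 - s) = c := by
    rw [hs_def]; rw [show (1:ℝ) - c / (1 + c) = 1 / (1+c) by field_simp; ring]
    field_simp
  -- the point z beyond x₀
  set z : X := x₀ + (s / (1 - s)) • (x₀ - x₁) with hz_def
  have hz_mem : z ∈ Metric.ball x₀ ρ := by
    rw [Metric.mem_ball, dist_eq_norm, hz_def]
    have he : x₀ + (s / (1 - s)) • (x₀ - x₁) - x₀ = (s / (1 - s)) • (x₀ - x₁) := by abel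
    rw [he, norm_smul, hsc, Real.norm_eq_abs, abs_of_pos hc]
    calc c * ‖x₀ - x₁‖ ≤ c * (‖x₀ - x₁‖ + 1) := by nlinarith [norm_nonneg (x₀ - x₁)]
      _ = ρ / 2 := by rw [hc_def]; field_simp
      _ < ρ := by linarith
  have hfz_top : f z ≠ ⊤ := hdom z hz_mem
  set az : ℝ := (f z).toReal with haz_def
  have hfz : f z = (az : EReal) := (EReal.coe_toReal hfz_top (hnotbot z)).symm
  -- upper bound on the small ball around x₀
  set δ : ℝ := s * r with hδ_def
  have hδ : 0 < δ := by positivity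
  set M₁ : ℝ := (1 - s) * az + s * M with hM₁_def
  have hA : ∀ y ∈ Metric.ball x₀ δ, ∃ a : ℝ, f y = (a : EReal) ∧ a ≤ M₁ := by
    intro y hy
    set w : X := x₁ + s⁻¹ • (y - x₀) with hw_def
    have hw_mem : w ∈ Metric.ball x₁ r := by
      rw [Metric.mem_ball, dist_eq_norm, hw_def]
      have he : x₁ + s⁻¹ • (y - x₀) - x₁ = s⁻¹ • (y - x₀) := by abel
      rw [he, norm_smul, Real.norm_eq_abs, abs_of_pos (inv_pos.2 hs0)]
      rw [Metric.mem_ball, dist_eq_norm] at hy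
      calc s⁻¹ * ‖y - x₀‖ < s⁻¹ * δ := by
            exact mul_lt_mul_of_pos_left hy (inv_pos.2 hs0)
        _ = r := by rw [hδ_def]; field_simp
    obtain ⟨b, hfw, hbM⟩ := real_of_le_coe (hnotbot w) (hbd w (hball₁ hw_mem))
    have hkey : (1 - s) • z + (1 - (1 - s)) • w = y := by
      rw [show (1 : ℝ) - (1 - s) = s by ring, hz_def, hw_def]
      match_scalars <;> field_simp <;> ring
    have := conv_real hconv hfz hfw (t := 1 - s) (by linarith) (by linarith)
    rw [hkey] at this
    obtain ⟨a, hfy, haux⟩ := real_of_le_coe (hnotbot y) this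
    refine ⟨a, hfy, ?_⟩
    rw [hM₁_def]
    nlinarith [hbM, hs0.le]
  -- the value at x₀
  obtain ⟨c₀, hfx₀, hc₀M⟩ := hA x₀ (Metric.mem_ball_self hδ)
  -- lower bound
  set m : ℝ := 2 * c₀ - M₁ with hm_def
  have hB : ∀ y ∈ Metric.ball x₀ δ, ∃ a : ℝ, f y = (a : EReal) ∧ m ≤ a ∧ a ≤ M₁ := by
    intro y hy
    obtain ⟨a, hfy, haM⟩ := hA y hy
    set y' : X := x₀ + (x₀ - y) with hy'_def
    have hy'_mem : y' ∈ Metric.ball x₀ δ := by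
      rw [Metric.mem_ball, dist_eq_norm, hy'_def]
      have he : x₀ + (x₀ - y) - x₀ = -(y - x₀) := by abel
      rw [he, norm_neg]
      rwa [Metric.mem_ball, dist_eq_norm] at hy
    obtain ⟨a', hfy', ha'M⟩ := hA y' hy'_mem
    have hkey : ((1:ℝ)/2) • y + (1 - (1:ℝ)/2) • y' = x₀ := by
      rw [hy'_def]; match_scalars <;> norm_num
    have := conv_real hconv hfy hfy' (t := (1:ℝ)/2) (by norm_num) (by norm_num)
    rw [hkey, hfx₀, EReal.coe_le_coe_iff] at this
    exact ⟨a, hfy, by rw [hm_def]; linarith, haM⟩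
  have hmM : m ≤ M₁ := by
    obtain ⟨a, hfy, h1, h2⟩ := hB x₀ (Metric.mem_ball_self hδ)
    linarith
  -- real-valued version
  set g : X → ℝ := fun y => (f y).toReal with hg_def
  have hg : ∀ y ∈ Metric.ball x₀ δ, f y = ((g y : ℝ) : EReal) ∧ m ≤ g y ∧ g y ≤ M₁ := by
    intro y hy
    obtain ⟨a, hfy, h1, h2⟩ := hB y hy
    have : g y = a := by rw [hg_def]; simp [hfy]
    rw [this]; exact ⟨hfy, h1, h2⟩
  -- Lipschitz constant
  set K : ℝ := 2 * (M₁ - m) / δ with hK_def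
  have hK0 : 0 ≤ K := by
    rw [hK_def]; exact div_nonneg (by linarith) (by linarith)
  -- Lipschitz estimate on the half ball
  have hC : ∀ x ∈ Metric.ball x₀ (δ/2), ∀ y ∈ Metric.ball x₀ (δ/2),
      g x ≤ g y + K * ‖x - y‖ := by
    intro x hx y hy
    have hxδ : x ∈ Metric.ball x₀ δ := by
      rw [Metric.mem_ball] at hx ⊢; linarith
    have hyδ : y ∈ Metric.ball x₀ δ := by
      rw [Metric.mem_ball] at hy ⊢; linarith
    rcases eq_or_ne x y with rfl | hne
    · have : (0:ℝ) ≤ K * ‖x - x‖ := by positivity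
      linarith
    · set p : ℝ := ‖x - y‖ with hp_def
      have hp : 0 < p := by
        rw [hp_def, norm_pos_iff]; exact sub_ne_zero_of_ne hne
      set z' : X := x + ((δ/2) / p) • (x - y) with hz'_def
      have hz'_mem : z' ∈ Metric.ball x₀ δ := by
        rw [Metric.mem_ball, dist_eq_norm, hz'_def]
        have he : x + ((δ/2)/p) • (x - y) - x₀ = (x - x₀) + ((δ/2)/p) • (x - y) := by abel
        rw [he]
        calc ‖(x - x₀) + ((δ/2)/p) • (x - y)‖ ≤ ‖x - x₀‖ + ‖((δ/2)/p) • (x - y)‖ :=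
              norm_add_le _ _
          _ = ‖x - x₀‖ + (δ/2)/p * p := by
              rw [norm_smul, Real.norm_eq_abs, abs_of_pos (by positivity), ← hp_def]
          _ = ‖x - x₀‖ + δ/2 := by rw [div_mul_cancel₀ _ hp.ne']
          _ < δ := by
              rw [Metric.mem_ball, dist_eq_norm] at hx; linarith
      set t : ℝ := p / (p + δ/2) with ht_def
      have hpq : (0:ℝ) < p + δ/2 := by linarith
      have ht0 : 0 < t := by positivity
      have ht1 : t < 1 := by rw [ht_def, div_lt_one hpq]; linarith
      have hkey : t • z' + (1 - t) • y = x := by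
        rw [ht_def, hz'_def]
        have hp' : p ≠ 0 := hp.ne'
        have hpq' : p + δ/2 ≠ 0 := hpq.ne'
        match_scalars <;> field_simp <;> ring
      obtain ⟨hfz', hmz', hz'M⟩ := hg z' hz'_mem
      obtain ⟨hfy', hmy, hyM⟩ := hg y hyδ
      obtain ⟨hfx', hmx, hxM⟩ := hg x hxδ
      have hcv := conv_real hconv hfz' hfy' (t := t) ht0.le ht1.le
      rw [hkey, hfx', EReal.coe_le_coe_iff] at hcv
      have htle : t ≤ 2 * p / δ := by
        have h1 : p / (p + δ/2) ≤ p / (δ/2) :=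
          div_le_div_of_nonneg_left hp.le (by linarith) (by linarith)
        have h2 : p / (δ/2) = 2 * p / δ := by
          rw [div_div_eq_mul_div, ← div_div]; ring_nf; rw [hδ_def]; ring
        rw [ht_def]
        calc p / (p + δ/2) ≤ p / (δ/2) := h1
          _ = 2 * p / δ := h2
      have h2 : t * (g z' - g y) ≤ t * (M₁ - m) :=
        mul_le_mul_of_nonneg_left (by linarith) ht0.le
      have h3 : t * (M₁ - m) ≤ 2 * p / δ * (M₁ - m) :=
        mul_le_mul_of_nonneg_right htle (by linarith)
      have h4 : 2 * p / δ * (M₁ - m) = K * p := by rw [hK_def]; ring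
      have h5 : t * (g z' - g y) = t * g z' - t * g y := by ring
      have h6 : (1 - t) * g y = g y - t * g y := by ring
      clear_value c s z az δ M₁ m g K p z' t
      linarith
  -- continuity of g
  have hball_nhds : Metric.ball x₀ (δ/2) ∈ 𝓝 x₀ := Metric.ball_mem_nhds x₀ (by linarith)
  have hgcont : ContinuousAt g x₀ := by
    have hlip : LipschitzOnWith (Real.toNNReal K) g (Metric.ball x₀ (δ/2)) := by
      apply LipschitzOnWith.of_dist_le_mul
      intro x hx y hy
      rw [Real.dist_eq, dist_eq_norm, Real.coe_toNNReal _ hK0, abs_sub_le_iff]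
      constructor
      · have := hC x hx y hy; linarith
      · have := hC y hy x hx; rw [norm_sub_rev] at this; linarith
    exact hlip.continuousOn.continuousAt hball_nhds
  constructor
  · -- continuity of f at x₀
    have heq : f =ᶠ[𝓝 x₀] fun y => ((g y : ℝ) : EReal) := by
      filter_upwards [hball_nhds] with y hy
      have h2δ : y ∈ Metric.ball x₀ δ := by
        rw [Metric.mem_ball] at hy ⊢; linarith
      exact (hg y h2δ).1
    have : ContinuousAt (fun y => ((g y : ℝ) : EReal)) x₀ :=
      continuous_coe_real_ereal.continuousAt.comp hgcont
    exact this.congr heq.symm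
  · -- Lipschitz conclusion
    refine ⟨Metric.ball x₀ (δ/2), hball_nhds, K, hK0, ?_⟩
    intro x hx y hy
    have hxδ : x ∈ Metric.ball x₀ δ := by
      rw [Metric.mem_ball] at hx ⊢; linarith
    have hyδ : y ∈ Metric.ball x₀ δ := by
      rw [Metric.mem_ball] at hy ⊢; linarith
    obtain ⟨hfx', -, -⟩ := hg x hxδ
    obtain ⟨hfy', -, -⟩ := hg y hyδ
    rw [hfx', hfy']
    have hreal : g x ≤ g y + K * ‖x - y‖ := hC x hx y hy
    calc ((g x : ℝ) : EReal) ≤ ((g y + K * ‖x - y‖ : ℝ) : EReal) := EReal.coe_le_coe_iff.2 hreal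
      _ = ((g y : ℝ) : EReal) + ((K * ‖x - y‖ : ℝ) : EReal) := by norm_cast
end

section
/- Let f, g₁, …, g_m : X → ℝ be convex functions on a normed space X, and suppose the Slater condition holds: there exists x₀ with f continuous at x₀ and g_j(x₀) < 0 for all j. Then a point x̄ with g_j(x̄) ≤ 0 for all j is optimal for the problem inf{ f(x) : g_j(x) ≤ 0, j = 1..m } if and only if there exist Lagrange multipliers λ̄₁, …, λ̄_m ≥ 0 such that x̄ minimizes f + Σ_j λ̄_j g_j over X and λ̄_j g_j(x̄) = 0 for every j. -/
theorem kkt_of_slater {X : Type*} [NormedAddCommGroup X] [NormedSpace ℝ X]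
    (m : ℕ) (f : X → ℝ) (g : Fin m → X → ℝ)
    (hf : ConvexOn ℝ Set.univ f) (hg : ∀ j, ConvexOn ℝ Set.univ (g j))
    (hflsc : LowerSemicontinuous f) (hglsc : ∀ j, LowerSemicontinuous (g j))
    (x₀ : X) (hslater : ContinuousAt f x₀ ∧ ∀ j, g j x₀ < 0)
    (xbar : X) (hfeas : ∀ j, g j xbar ≤ 0) :
    (∀ x : X, (∀ j, g j x ≤ 0) → f xbar ≤ f x) ↔
      ∃ lam : Fin m → ℝ, (∀ j, 0 ≤ lam j) ∧
        (∀ x : X, f xbar + ∑ j, lam j * g j xbar ≤ f x + ∑ j, lam j * g j x) ∧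
        (∀ j, lam j * g j xbar = 0) := by
  classical
  constructor
  · intro hopt
    -- the image-type convex set
    set C : Set (Fin (m + 1) → ℝ) :=
      {y | ∃ x : X, f x - f xbar ≤ y 0 ∧ ∀ j : Fin m, g j x ≤ y j.succ} with hC
    set O : Set (Fin (m + 1) → ℝ) := {y | ∀ i, y i < 0} with hO
    have hOopen : IsOpen O := by
      have : O = ⋂ i, {y : Fin (m + 1) → ℝ | y i < 0} := by
        ext y; simp [hO]
      rw [this]
      exact isOpen_iInter_of_finite fun i =>
        isOpen_lt (continuous_apply i) continuous_const
    have hOconv : Convex ℝ O := by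
      intro y hy z hz a b ha hb hab i
      simp only [Pi.add_apply, Pi.smul_apply, smul_eq_mul]
      rcases (lt_or_eq_of_le ha) with ha' | ha'
      · have h1 : a * y i < 0 := mul_neg_of_pos_of_neg ha' (hy i)
        have h2 : b * z i ≤ 0 := mul_nonpos_of_nonneg_of_nonpos hb (hz i).le
        linarith
      · have hb1 : b = 1 := by linarith
        have := hz i
        simp [← ha', hb1]
        linarith
    have hCconv : Convex ℝ C := by
      rintro y ⟨x₁, hx₁f, hx₁g⟩ z ⟨x₂, hx₂f, hx₂g⟩ a b ha hb hab
      refine ⟨a • x₁ + b • x₂, ?_, ?_⟩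
      · have h := hf.2 (Set.mem_univ x₁) (Set.mem_univ x₂) ha hb hab
        simp only [smul_eq_mul] at h
        simp only [Pi.add_apply, Pi.smul_apply, smul_eq_mul]
        have e1 : a * (f x₁ - f xbar) ≤ a * y 0 := mul_le_mul_of_nonneg_left hx₁f ha
        have e2 : b * (f x₂ - f xbar) ≤ b * z 0 := mul_le_mul_of_nonneg_left hx₂f hb
        have e3 : a * (f x₁ - f xbar) + b * (f x₂ - f xbar)
            = a * f x₁ + b * f x₂ - (a + b) * f xbar := by ring
        rw [hab] at e3
        linarith
      · intro j
        have h := (hg j).2 (Set.mem_univ x₁) (Set.mem_univ x₂) ha hb hab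
        simp only [smul_eq_mul] at h
        simp only [Pi.add_apply, Pi.smul_apply, smul_eq_mul]
        have e1 : a * g j x₁ ≤ a * y j.succ := mul_le_mul_of_nonneg_left (hx₁g j) ha
        have e2 : b * g j x₂ ≤ b * z j.succ := mul_le_mul_of_nonneg_left (hx₂g j) hb
        linarith
    have hdisj : Disjoint O C := by
      rw [Set.disjoint_left]
      rintro y hyO ⟨x, hxf, hxg⟩
      have hfeasx : ∀ j, g j x ≤ 0 := fun j => (hxg j).trans (hyO j.succ).le
      have h1 := hopt x hfeasx
      have h2 := hyO 0
      linarith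
    obtain ⟨φ, u, hφO, hφC⟩ := geometric_hahn_banach_open hOconv hOopen hCconv hdisj
    set μ : Fin (m + 1) → ℝ := fun i => φ (Pi.single i (1 : ℝ)) with hμ
    have hrep : ∀ y : Fin (m + 1) → ℝ, φ y = ∑ i, y i * μ i := by
      intro y
      have hy : ∑ i, Pi.single i (y i) = y := Finset.univ_sum_single y
      conv_lhs => rw [← hy]
      rw [map_sum]
      refine Finset.sum_congr rfl fun i _ => ?_
      have : (Pi.single i (y i) : Fin (m+1) → ℝ)
          = y i • (Pi.single i (1 : ℝ) : Fin (m+1) → ℝ) := by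
        rw [← Pi.single_smul, smul_eq_mul, mul_one]
      rw [this, map_smul, smul_eq_mul, hμ]
    -- membership facts
    have hmemC : ∀ x : X, (Fin.cons (f x - f xbar) (fun j => g j x) : Fin (m+1) → ℝ) ∈ C := by
      intro x
      exact ⟨x, by simp, fun j => by simp⟩
    have hkey : ∀ x : X, u ≤ (f x - f xbar) * μ 0 + ∑ j : Fin m, g j x * μ j.succ := by
      intro x
      have h := hφC _ (hmemC x)
      rw [hrep] at h
      rwa [Fin.sum_univ_succ, Fin.cons_zero] at h
      -- remaining: cons succ simp
    -- μ nonneg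
    have hμnonneg : ∀ i, 0 ≤ μ i := by
      intro i
      by_contra hneg
      push_neg at hneg
      set S : ℝ := ∑ k, μ k with hS
      set t : ℝ := (|u| + |S| + 1) / (-μ i) with ht
      have htpos : 0 < t := div_pos (by positivity) (by linarith)
      set y : Fin (m + 1) → ℝ := fun k => if k = i then -1 - t else -1 with hy
      have hyO : y ∈ O := by
        intro k
        simp only [hy]
        split <;> linarith
      have := hφO y hyO
      rw [hrep] at this
      have hsum : ∑ k, y k * μ k = -S + (-t) * μ i := by
        have : ∀ k, y k * μ k = -μ k + (if k = i then (-t) * μ i else 0) := by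
          intro k
          simp only [hy]
          split
          · rename_i hk; subst hk; ring
          · ring
        rw [Finset.sum_congr rfl fun k _ => this k, Finset.sum_add_distrib,
          Finset.sum_ite_eq' Finset.univ i]
        simp [hS, Finset.sum_neg_distrib]
      rw [hsum] at this
      have hne : -μ i ≠ 0 := by linarith
      have hcancel : (-t) * μ i = |u| + |S| + 1 := by
        calc (-t) * μ i = ((|u| + |S| + 1) / (-μ i)) * (-μ i) := by rw [ht]; ring
          _ = |u| + |S| + 1 := div_mul_cancel₀ _ hne
      rw [hcancel] at this
      have h1 : S ≤ |S| := le_abs_self S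
      have h2 : u ≤ |u| := le_abs_self u
      linarith
    -- u nonneg
    have hu0 : 0 ≤ u := by
      by_contra hneg
      push_neg at hneg
      set S : ℝ := ∑ k, μ k with hS
      have hSnonneg : 0 ≤ S := Finset.sum_nonneg fun k _ => hμnonneg k
      rcases eq_or_lt_of_le hSnonneg with hS0 | hSpos
      · have hyO : (fun _ => (-1 : ℝ)) ∈ O := fun k => by norm_num
        have h := hφO _ hyO
        rw [hrep] at h
        have heq : ∑ k, (fun _ => (-1 : ℝ)) k * μ k = -S := by
          simp [hS, neg_one_mul]
        rw [heq, ← hS0, neg_zero] at h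
        linarith
      · set ε : ℝ := -u / (2 * S) with hε
        have hεpos : 0 < ε := div_pos (by linarith) (by linarith)
        have hyO : (fun _ => -ε : Fin (m+1) → ℝ) ∈ O := fun k => by simpa using hεpos
        have := hφO _ hyO
        rw [hrep] at this
        have heq : ∑ k, (fun _ => -ε : Fin (m+1) → ℝ) k * μ k = -ε * S := by
          simp [hS, Finset.mul_sum]
        rw [heq] at this
        have : -ε * S = u / 2 := by
          rw [hε]; field_simp
        linarith [this ▸ ‹-ε * S < u›]
    -- μ 0 positive
    have hμ0pos : 0 < μ 0 := by
      rcases eq_or_lt_of_le (hμnonneg 0) with h0 | h0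
      · exfalso
        have hx0 := hkey x₀
        rw [← h0, mul_zero, zero_add] at hx0
        have hterms : ∀ j ∈ Finset.univ, g j x₀ * μ (Fin.succ j) ≤ 0 := fun j _ =>
          mul_nonpos_of_nonpos_of_nonneg (hslater.2 j).le (hμnonneg _)
        have hsum0 : ∑ j : Fin m, g j x₀ * μ j.succ = 0 :=
          le_antisymm (Finset.sum_nonpos hterms) (le_trans hu0 hx0)
        have hμsucc0 : ∀ j : Fin m, μ j.succ = 0 := by
          intro j
          have := (Finset.sum_eq_zero_iff_of_nonpos hterms).mp hsum0 j (Finset.mem_univ j)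
          have hgne : g j x₀ ≠ 0 := ne_of_lt (hslater.2 j)
          exact (mul_eq_zero.mp this).resolve_left hgne
        -- all μ zero: contradiction with strict inequality on O and C
        have hallzero : ∀ i, μ i = 0 := by
          intro i
          refine Fin.cases ?_ ?_ i
          · exact h0.symm
          · exact hμsucc0
        have hyO : (fun _ => (-1 : ℝ)) ∈ O := fun k => by norm_num
        have h1 := hφO _ hyO
        rw [hrep] at h1
        have h1' : (0:ℝ) < u := by
          have : ∑ k, (fun _ => (-1:ℝ)) k * μ k = 0 :=
            Finset.sum_eq_zero fun k _ => by rw [hallzero k, mul_zero]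
          linarith [this ▸ h1]
        have h2 := hkey xbar
        have h2' : (f xbar - f xbar) * μ 0 + ∑ j : Fin m, g j xbar * μ j.succ = 0 := by
          rw [← h0, mul_zero, zero_add]
          exact Finset.sum_eq_zero fun j _ => by rw [hμsucc0 j, mul_zero]
        linarith [h2' ▸ h2]
      · exact h0
    -- define multipliers
    refine ⟨fun j => μ j.succ / μ 0, fun j => div_nonneg (hμnonneg _) hμ0pos.le, ?_, ?_⟩
    all_goals {
      have hkey2 : ∀ x : X, 0 ≤ (f x - f xbar) + ∑ j : Fin m, (μ j.succ / μ 0) * g j x := by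
        intro x
        have h1 : 0 ≤ (f x - f xbar) * μ 0 + ∑ j : Fin m, g j x * μ j.succ :=
          le_trans hu0 (hkey x)
        have h2 : ∑ j : Fin m, g j x * μ j.succ
            = μ 0 * ∑ j : Fin m, (μ j.succ / μ 0) * g j x := by
          rw [Finset.mul_sum]
          refine Finset.sum_congr rfl fun j _ => ?_
          field_simp
        rw [h2] at h1
        by_contra hneg
        push_neg at hneg
        nlinarith
      have hcs : ∀ j : Fin m, (μ j.succ / μ 0) * g j xbar = 0 := by
        have hsnn : 0 ≤ ∑ j : Fin m, (μ j.succ / μ 0) * g j xbar := by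
          have := hkey2 xbar
          simpa using this
        have hterms : ∀ j ∈ Finset.univ, (μ j.succ / μ 0) * g j xbar ≤ 0 := fun j _ =>
          mul_nonpos_of_nonneg_of_nonpos (div_nonneg (hμnonneg _) hμ0pos.le) (hfeas j)
        intro j
        exact (Finset.sum_eq_zero_iff_of_nonpos hterms).mp
          (le_antisymm (Finset.sum_nonpos hterms) hsnn) j (Finset.mem_univ j)
      first
      | (intro x
         have h1 : ∑ j : Fin m, (μ j.succ / μ 0) * g j xbar = 0 :=
           Finset.sum_eq_zero fun j _ => hcs j
         have := hkey2 x
         linarith)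
      | exact hcs
    }
  · rintro ⟨lam, hlam0, hmin, hcs⟩ x hx
    have h1 : ∑ j, lam j * g j xbar = 0 := Finset.sum_eq_zero fun j _ => hcs j
    have h2 : ∑ j, lam j * g j x ≤ 0 :=
      Finset.sum_nonpos fun j _ => mul_nonpos_of_nonneg_of_nonpos (hlam0 j) (hx j)
    have := hmin x
    linarith
end
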